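/- Let p ∈ ℝ^J with p_j > 0 for all j, and let q ∈ ℝ^{I×J} with q_{ij} ≥ 0 for all i,j. Then the following are equivalent: (a) for every user i, the vector q_i = (q_{i1},…,q_{iJ}) maximizes r ↦ u_i(∑_{j=1}^J r_j c_{ij}) − ∑_{j=1}^J p_j r_j over nonnegative vectors r ∈ ℝ^J, and demand equals supply, i.e. ∑_{i=1}^I q_{ij} = Q_j for every j; (b) (q, p) is a KKT point of SWO. Moreover, in this case q is an optimal solution of SWO, and if additionally the channel offsets are generic, q is the unique optimal solution of SWO. -/

import Mathlib

/-- A demand matrix is feasible if it is componentwise nonnegative and the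
demand to each provider equals its supply. -/
def Feasible {I J : ℕ} (Q : Fin J → ℝ) (q : Fin I → Fin J → ℝ) : Prop :=
  (∀ i j, 0 ≤ q i j) ∧ ∀ j, ∑ i, q i j = Q j

/-- The effective resource of user `i` under demand matrix `q`. -/
def effRes {I J : ℕ} (c q : Fin I → Fin J → ℝ) (i : Fin I) : ℝ :=
  ∑ j, q i j * c i j

/-- The social welfare of a demand matrix. -/
def welfare {I J : ℕ} (u : Fin I → ℝ → ℝ) (c q : Fin I → Fin J → ℝ) : ℝ :=
  ∑ i, u i (effRes c q i)

/-- `(q, p)` is a KKT point of SWO. -/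
def KKTPoint {I J : ℕ} (u : Fin I → ℝ → ℝ) (Q : Fin J → ℝ)
    (c q : Fin I → Fin J → ℝ) (p : Fin J → ℝ) : Prop :=
  Feasible Q q ∧ (∀ j, 0 < p j) ∧
  (∀ i j, deriv (u i) (effRes c q i) * c i j ≤ p j) ∧
  (∀ i j, q i j * (deriv (u i) (effRes c q i) * c i j - p j) = 0)

/-- The channel quality offsets are generic: no cycle of distinct users and
distinct providers has offset-ratio product equal to one. -/
def Generic {I J : ℕ} (c : Fin I → Fin J → ℝ) : Prop :=
  ∀ (n : ℕ) (_hn : 2 ≤ n) (ii : Fin n → Fin I) (jj : Fin n → Fin J),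
    Function.Injective ii → Function.Injective jj →
    ∏ k : Fin n, c (ii k) (jj (k - ⟨1, by omega⟩)) / c (ii k) (jj k) ≠ 1

open Filter Set
private lemma concave_grad {f : ℝ → ℝ} (hd : Differentiable ℝ f)
    (hc : ConcaveOn ℝ Set.univ f) (x y : ℝ) :
    f y ≤ f x + deriv f x * (y - x) := by
  rcases lt_trichotomy x y with h | h | h
  · have h2 := hc.slope_le_deriv (Set.mem_univ x) (Set.mem_univ y) h (hd x)
    rw [slope_def_field, div_le_iff₀ (by linarith : (0:ℝ) < y - x)] at h2
    linarith
  · simp [h]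
  · have h2 := hc.deriv_le_slope (Set.mem_univ y) (Set.mem_univ x) h (hd x)
    rw [slope_def_field, le_div_iff₀ (by linarith : (0:ℝ) < x - y)] at h2
    nlinarith

open Filter Set

private lemma deriv_le_of_right {g : ℝ → ℝ} {g' b : ℝ} (hg : HasDerivAt g g' 0)
    (h : ∀ t : ℝ, 0 < t → g t - g 0 ≤ b * t) : g' ≤ b := by
  have ht : Tendsto (slope g 0) (nhdsWithin 0 (Set.Ioi 0)) (nhds g') :=
    (hasDerivAt_iff_tendsto_slope.mp hg).mono_left
      (nhdsWithin_mono 0 (fun t ht => ne_of_gt ht))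
  refine le_of_tendsto ht ?_
  filter_upwards [self_mem_nhdsWithin] with t ht'
  rw [slope_def_field, sub_zero, div_le_iff₀ ht']
  exact h t ht'

private lemma le_deriv_of_left {g : ℝ → ℝ} {g' b δ : ℝ} (hδ : 0 < δ) (hg : HasDerivAt g g' 0)
    (h : ∀ t : ℝ, -δ < t → t < 0 → g t - g 0 ≤ b * t) : b ≤ g' := by
  have ht : Tendsto (slope g 0) (nhdsWithin 0 (Set.Iio 0)) (nhds g') :=
    (hasDerivAt_iff_tendsto_slope.mp hg).mono_left
      (nhdsWithin_mono 0 (fun t ht => ne_of_lt ht))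
  refine ge_of_tendsto ht ?_
  filter_upwards [Ioo_mem_nhdsLT_of_mem (⟨by linarith, le_refl (0:ℝ)⟩ : (0:ℝ) ∈ Set.Ioc (-δ) 0)]
    with t ht'
  rw [slope_def_field, sub_zero, le_div_iff_of_neg ht'.2]
  exact h t ht'.1 ht'.2

private lemma sum_update_mul {J : ℕ} (f g : Fin J → ℝ) (j : Fin J) (a : ℝ) :
    ∑ j', Function.update f j a j' * g j' = (∑ j', f j' * g j') + (a - f j) * g j := by
  have h : (fun j' => Function.update f j a j' * g j') =
      Function.update (fun j' => f j' * g j') j (a * g j) := by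
    funext j'
    rcases eq_or_ne j' j with rfl | hne
    · simp
    · simp [Function.update_of_ne hne]
  rw [h, Finset.sum_update_of_mem (Finset.mem_univ j),
    Finset.sum_eq_sum_sdiff_singleton_add (Finset.mem_univ j) (fun j' => f j' * g j')]
  ring

private lemma sum_mul_update {J : ℕ} (f g : Fin J → ℝ) (j : Fin J) (a : ℝ) :
    ∑ j', g j' * Function.update f j a j' = (∑ j', g j' * f j') + g j * (a - f j) := by
  have h : (fun j' => g j' * Function.update f j a j') =
      Function.update (fun j' => g j' * f j') j (g j * a) := by
    funext j'
    rcases eq_or_ne j' j with rfl | hne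
    · simp
    · simp [Function.update_of_ne hne]
  rw [h, Finset.sum_update_of_mem (Finset.mem_univ j),
    Finset.sum_eq_sum_sdiff_singleton_add (Finset.mem_univ j) (fun j' => g j' * f j')]
  ring

private lemma fin_sub_one_val {n : ℕ} (hn : 2 ≤ n) (k : Fin n) :
    (k - (⟨1, by omega⟩ : Fin n)).val = if k.val = 0 then n - 1 else k.val - 1 := by
  rw [Fin.sub_def]
  rcases eq_or_ne k.val 0 with h | h
  · simp only [h, Nat.add_zero, if_pos]
    exact Nat.mod_eq_of_lt (by omega)
  · have h1 : n - 1 + k.val = (k.val - 1) + n := by omega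
    rw [if_neg h]
    show (n - 1 + k.val) % n = k.val - 1
    rw [h1, Nat.add_mod_right, Nat.mod_eq_of_lt (by omega)]

private noncomputable def cycStep {I J : ℕ} (E : Fin I → Fin J → Prop)
    (hA : ∀ i j, E i j → ∃ j', j' ≠ j ∧ E i j')
    (hB : ∀ i j, E i j → ∃ i', i' ≠ i ∧ E i' j)
    (x : {x : Fin I × Fin J // E x.1 x.2}) : {x : Fin I × Fin J // E x.1 x.2} :=
  ⟨((hB x.1.1 x.1.2 x.2).choose,
    (hA (hB x.1.1 x.1.2 x.2).choose x.1.2 (hB x.1.1 x.1.2 x.2).choose_spec.2).choose),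
   (hA (hB x.1.1 x.1.2 x.2).choose x.1.2 (hB x.1.1 x.1.2 x.2).choose_spec.2).choose_spec.2⟩

private lemma cycStep_spec {I J : ℕ} (E : Fin I → Fin J → Prop)
    (hA : ∀ i j, E i j → ∃ j', j' ≠ j ∧ E i j')
    (hB : ∀ i j, E i j → ∃ i', i' ≠ i ∧ E i' j)
    (x : {x : Fin I × Fin J // E x.1 x.2}) :
    (cycStep E hA hB x).1.1 ≠ x.1.1 ∧ E (cycStep E hA hB x).1.1 x.1.2 ∧
      (cycStep E hA hB x).1.2 ≠ x.1.2 :=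
  ⟨(hB x.1.1 x.1.2 x.2).choose_spec.1, (hB x.1.1 x.1.2 x.2).choose_spec.2,
   (hA (hB x.1.1 x.1.2 x.2).choose x.1.2 (hB x.1.1 x.1.2 x.2).choose_spec.2).choose_spec.1⟩

private lemma fin_sub_one_val' {n : ℕ} (hn : 2 ≤ n) (k : Fin n) :
    (k - (⟨1, by omega⟩ : Fin n)).val = if k.val = 0 then n - 1 else k.val - 1 := by
  rw [Fin.sub_def]
  rcases eq_or_ne k.val 0 with h | h
  · simp only [h, Nat.add_zero, if_pos]
    exact Nat.mod_eq_of_lt (by omega)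
  · have h1 : n - 1 + k.val = (k.val - 1) + n := by omega
    rw [if_neg h]
    show (n - 1 + k.val) % n = k.val - 1
    rw [h1, Nat.add_mod_right, Nat.mod_eq_of_lt (by omega)]

private lemma cycle_of_seq {I J : ℕ} (E : Fin I → Fin J → Prop)
    (ik : ℕ → Fin I) (jk : ℕ → Fin J) (b n : ℕ) (hn : 2 ≤ n)
    (hinji : ∀ a a', b ≤ a → a < a' → a' < b + n → ik a ≠ ik a')
    (hinjj : ∀ a a', b ≤ a → a < a' → a' < b + n → jk a ≠ jk a')
    (h1 : ∀ m, E (ik m) (jk m))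
    (h3 : ∀ m, E (ik (m + 1)) (jk m))
    (hwrap : E (ik b) (jk (b + (n - 1)))) :
    ∃ (ii : Fin n → Fin I) (jj : Fin n → Fin J),
      Function.Injective ii ∧ Function.Injective jj ∧
      (∀ k, E (ii k) (jj k)) ∧
      (∀ k : Fin n, E (ii k) (jj (k - ⟨1, by omega⟩))) := by
  refine ⟨fun k => ik (b + k.val), fun k => jk (b + k.val), ?_, ?_, fun k => h1 _, ?_⟩
  · intro k k' h
    by_contra hne
    have hv : k.val ≠ k'.val := fun hv => hne (Fin.ext hv)
    rcases Nat.lt_or_ge k.val k'.val with hlt | hge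
    · exact hinji (b + k.val) (b + k'.val) (by omega) (by omega) (by omega) h
    · exact hinji (b + k'.val) (b + k.val) (by omega) (by omega) (by omega) h.symm
  · intro k k' h
    by_contra hne
    have hv : k.val ≠ k'.val := fun hv => hne (Fin.ext hv)
    rcases Nat.lt_or_ge k.val k'.val with hlt | hge
    · exact hinjj (b + k.val) (b + k'.val) (by omega) (by omega) (by omega) h
    · exact hinjj (b + k'.val) (b + k.val) (by omega) (by omega) (by omega) h.symm
  · intro k
    have hv := fin_sub_one_val' hn k
    dsimp only
    rcases eq_or_ne k.val 0 with h0 | h0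
    · rw [if_pos h0] at hv
      rw [hv, h0]
      simpa using hwrap
    · rw [if_neg h0] at hv
      rw [hv, show b + k.val = (b + (k.val - 1)) + 1 by omega]
      exact h3 _

private lemma exists_cycle {I J : ℕ} (E : Fin I → Fin J → Prop)
    (hA : ∀ i j, E i j → ∃ j', j' ≠ j ∧ E i j')
    (hB : ∀ i j, E i j → ∃ i', i' ≠ i ∧ E i' j)
    (i0 : Fin I) (j0 : Fin J) (h0 : E i0 j0) :
    ∃ (n : ℕ) (hn : 2 ≤ n) (ii : Fin n → Fin I) (jj : Fin n → Fin J),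
      Function.Injective ii ∧ Function.Injective jj ∧
      (∀ k, E (ii k) (jj k)) ∧
      (∀ k : Fin n, E (ii k) (jj (k - ⟨1, by omega⟩))) := by
  classical
  set g : ℕ → {x : Fin I × Fin J // E x.1 x.2} :=
    fun m => (cycStep E hA hB)^[m] ⟨(i0, j0), h0⟩ with hgdef
  set ik : ℕ → Fin I := fun m => (g m).1.1 with hikdef
  set jk : ℕ → Fin J := fun m => (g m).1.2 with hjkdef
  have hg : ∀ m, g (m + 1) = cycStep E hA hB (g m) := fun m =>
    Function.iterate_succ_apply' (cycStep E hA hB) m _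
  have P1 : ∀ m, E (ik m) (jk m) := fun m => (g m).2
  have P2 : ∀ m, ik (m + 1) ≠ ik m := fun m => by
    show (g (m + 1)).1.1 ≠ (g m).1.1
    rw [hg m]; exact (cycStep_spec E hA hB (g m)).1
  have P3 : ∀ m, E (ik (m + 1)) (jk m) := fun m => by
    show E (g (m + 1)).1.1 (g m).1.2
    rw [hg m]; exact (cycStep_spec E hA hB (g m)).2.1
  have P4 : ∀ m, jk (m + 1) ≠ jk m := fun m => by
    show (g (m + 1)).1.2 ≠ (g m).1.2
    rw [hg m]; exact (cycStep_spec E hA hB (g m)).2.2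
  -- pigeonhole
  have hPex : ∃ t, ∃ s, s < t ∧ (ik s = ik t ∨ jk s = jk t) := by
    obtain ⟨x, y, hxy, hxyeq⟩ := Finite.exists_ne_map_eq_of_infinite ik
    rcases Nat.lt_or_ge x y with hlt | hge
    · exact ⟨y, x, hlt, Or.inl hxyeq⟩
    · exact ⟨x, y, by omega, Or.inl hxyeq.symm⟩
  set t := Nat.find hPex with htdef
  have hPt := Nat.find_spec hPex
  have hmin : ∀ t' < t, ¬ ∃ s, s < t' ∧ (ik s = ik t' ∨ jk s = jk t') := fun t' h =>
    Nat.find_min hPex h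
  have hdisti : ∀ a a', a < a' → a' < t → ik a ≠ ik a' := fun a a' h h' he =>
    hmin a' h' ⟨a, h, Or.inl he⟩
  have hdistj : ∀ a a', a < a' → a' < t → jk a ≠ jk a' := fun a a' h h' he =>
    hmin a' h' ⟨a, h, Or.inr he⟩
  obtain ⟨s, hst, hcase⟩ := hPt
  by_cases hcaseI : ∃ s', s' < t ∧ ik s' = ik t
  · obtain ⟨s', hs't, hiks'⟩ := hcaseI
    have hn2 : 2 ≤ t - s' := by
      rcases Nat.lt_or_ge (s' + 1) t with h | h
      · omega
      · exfalso
        have he : t = s' + 1 := by omega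
        exact P2 s' (by rw [← he]; exact hiks'.symm)
    refine ⟨t - s', hn2, ?_⟩
    refine cycle_of_seq E ik jk s' (t - s') hn2
      (fun a a' _ h h' => hdisti a a' h (by omega))
      (fun a a' _ h h' => hdistj a a' h (by omega)) P1 P3 ?_
    rw [show s' + (t - s' - 1) = t - 1 by omega, hiks']
    have := P3 (t - 1)
    rw [show t - 1 + 1 = t by omega] at this
    exact this
  · have hjks : jk s = jk t := by
      rcases hcase with h | h
      · exact absurd ⟨s, hst, h⟩ hcaseI
      · exact h
    have hn2 : 2 ≤ t - s := by
      rcases Nat.lt_or_ge (s + 1) t with h | h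
      · omega
      · exfalso
        have he : t = s + 1 := by omega
        exact P4 s (by rw [← he]; exact hjks.symm)
    refine ⟨t - s, hn2, ?_⟩
    refine cycle_of_seq E ik jk (s + 1) (t - s) hn2 ?_ ?_ P1 P3 ?_
    · intro a a' ha h h'
      rcases Nat.lt_or_ge a' t with hlt | hge
      · exact hdisti a a' h hlt
      · have he : a' = t := by omega
        intro heq
        exact hcaseI ⟨a, by omega, by rw [← he]; exact heq⟩
    · intro a a' ha h h'
      rcases Nat.lt_or_ge a' t with hlt | hge
      · exact hdistj a a' h hlt
      · have he : a' = t := by omega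
        intro heq
        rw [he, ← hjks] at heq
        exact hdistj s a (by omega) (by omega) heq.symm
    · rw [show s + 1 + (t - s - 1) = t by omega, ← hjks]
      exact P3 s

/-- For nonnegative `q` and positive prices `p`:
every user's demand maximizes its payoff and demand equals supply iff
`(q, p)` is a KKT point of SWO; moreover, in this case `q` is an optimal
solution of SWO, and if the channel offsets are generic it is the unique
optimal solution. -/
theorem user_optimality_and_market_clearing_iff_kkt
    (I J : ℕ) (hI : 0 < I) (hJ : 0 < J)
    (u : Fin I → ℝ → ℝ)
    (hu_diff : ∀ i, Differentiable ℝ (u i))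
    (hu_mono : ∀ i, StrictMono (u i))
    (hu_conc : ∀ i, StrictConcaveOn ℝ Set.univ (u i))
    (Q : Fin J → ℝ) (hQ : ∀ j, 0 < Q j)
    (c : Fin I → Fin J → ℝ) (hc : ∀ i j, 0 < c i j)
    (p : Fin J → ℝ) (hp : ∀ j, 0 < p j)
    (q : Fin I → Fin J → ℝ) (hq : ∀ i j, 0 ≤ q i j) :
    (((∀ i : Fin I, ∀ r : Fin J → ℝ, (∀ j, 0 ≤ r j) →
        u i (∑ j, r j * c i j) - ∑ j, p j * r j ≤
          u i (∑ j, q i j * c i j) - ∑ j, p j * q i j) ∧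
      (∀ j, ∑ i, q i j = Q j)) ↔ KKTPoint u Q c q p) ∧
    (KKTPoint u Q c q p →
      (Feasible Q q ∧
        ∀ q' : Fin I → Fin J → ℝ, Feasible Q q' → welfare u c q' ≤ welfare u c q) ∧
      (Generic c →
        ∀ q' : Fin I → Fin J → ℝ, Feasible Q q' →
          (∀ r : Fin I → Fin J → ℝ, Feasible Q r → welfare u c r ≤ welfare u c q') →
          q' = q)) := by
  classical
  have hder : ∀ (i : Fin I) (j : Fin J),
      HasDerivAt (fun t : ℝ => u i (effRes c q i + t * c i j))
        (deriv (u i) (effRes c q i) * c i j) 0 := by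
    intro i j
    have h1 : HasDerivAt (fun t : ℝ => effRes c q i + t * c i j) (c i j) 0 :=
      (hasDerivAt_mul_const (c i j)).const_add (effRes c q i)
    have h2 := (((hu_diff i) (effRes c q i + 0 * c i j)).hasDerivAt).comp 0 h1
    simpa [Function.comp_def] using h2
  constructor
  · constructor
    · rintro ⟨hopt, hmc⟩
      have hkey : ∀ (i : Fin I) (j : Fin J) (t : ℝ), 0 ≤ q i j + t →
          u i (effRes c q i + t * c i j) - u i (effRes c q i) ≤ p j * t := by
        intro i j t htq
        have hr : ∀ j', 0 ≤ Function.update (q i) j (q i j + t) j' := by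
          intro j'
          rcases eq_or_ne j' j with rfl | hne
          · rw [Function.update_self]; exact htq
          · rw [Function.update_of_ne hne]; exact hq i j'
        have key := hopt i (Function.update (q i) j (q i j + t)) hr
        rw [sum_update_mul (q i) (c i) j (q i j + t), sum_mul_update (q i) p j (q i j + t),
          show q i j + t - q i j = t by ring] at key
        have hE : effRes c q i = ∑ j', q i j' * c i j' := rfl
        rw [hE]
        linarith
      have h3 : ∀ i j, deriv (u i) (effRes c q i) * c i j ≤ p j := by
        intro i j
        refine deriv_le_of_right (hder i j) (fun t ht => ?_)
        simpa using hkey i j t (by linarith [hq i j])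
      refine ⟨⟨hq, hmc⟩, hp, h3, ?_⟩
      intro i j
      rcases eq_or_ne (q i j) 0 with h0 | h0
      · rw [h0, zero_mul]
      · have hqpos : 0 < q i j := lt_of_le_of_ne (hq i j) (Ne.symm h0)
        have h4 : p j ≤ deriv (u i) (effRes c q i) * c i j := by
          refine le_deriv_of_left hqpos (hder i j) (fun t ht1 ht2 => ?_)
          simpa using hkey i j t (by linarith)
        rw [le_antisymm (h3 i j) h4, sub_self, mul_zero]
    · rintro ⟨⟨hq0, hmc⟩, hp', h3, h4⟩
      refine ⟨?_, hmc⟩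
      intro i r hr
      have key := concave_grad (hu_diff i) (hu_conc i).concaveOn
        (effRes c q i) (∑ j, r j * c i j)
      have id1 : ∀ s : Fin J → ℝ,
          ∑ j, (deriv (u i) (effRes c q i) * c i j - p j) * s j
            = deriv (u i) (effRes c q i) * (∑ j, s j * c i j) - ∑ j, p j * s j := by
        intro s
        rw [Finset.mul_sum, ← Finset.sum_sub_distrib]
        exact Finset.sum_congr rfl fun j _ => by ring
      have hzero : ∑ j, (deriv (u i) (effRes c q i) * c i j - p j) * q i j = 0 :=
        Finset.sum_eq_zero fun j _ => by rw [mul_comm]; exact h4 i j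
      have hnp : ∑ j, (deriv (u i) (effRes c q i) * c i j - p j) * r j ≤ 0 :=
        Finset.sum_nonpos fun j _ =>
          mul_nonpos_iff.mpr (Or.inr ⟨sub_nonpos.mpr (h3 i j), hr j⟩)
      have e1 := id1 r
      have e2 := id1 (q i)
      have hE : effRes c q i = ∑ j', q i j' * c i j' := rfl
      rw [hE] at key e1 e2 hzero hnp
      have e3 := mul_sub (deriv (u i) (∑ j', q i j' * c i j'))
        (∑ j, r j * c i j) (∑ j', q i j' * c i j')
      linarith
  · intro hK
    obtain ⟨⟨hq0, hmc⟩, hp', h3, h4⟩ := hK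
    have chain : ∀ q'' : Fin I → Fin J → ℝ, Feasible Q q'' →
        welfare u c q'' ≤ welfare u c q
          + ∑ i, ∑ j, (deriv (u i) (effRes c q i) * c i j - p j) * q'' i j := by
      intro q'' hf''
      have step2 : welfare u c q'' ≤ welfare u c q
          + ∑ i, deriv (u i) (effRes c q i) * (effRes c q'' i - effRes c q i) := by
        simp only [welfare]
        rw [← Finset.sum_add_distrib]
        exact Finset.sum_le_sum fun i _ =>
          concave_grad (hu_diff i) (hu_conc i).concaveOn _ _
      refine step2.trans (le_of_eq ?_)
      congr 1
      have expand : ∀ r : Fin I → Fin J → ℝ,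
          ∑ i, deriv (u i) (effRes c q i) * effRes c r i
            = (∑ i, ∑ j, (deriv (u i) (effRes c q i) * c i j - p j) * r i j)
              + ∑ i, ∑ j, p j * r i j := by
        intro r
        rw [← Finset.sum_add_distrib]
        refine Finset.sum_congr rfl fun i _ => ?_
        simp only [effRes]
        rw [Finset.mul_sum, ← Finset.sum_add_distrib]
        exact Finset.sum_congr rfl fun j _ => by ring
      have hzero : ∑ i, ∑ j, (deriv (u i) (effRes c q i) * c i j - p j) * q i j = 0 :=
        Finset.sum_eq_zero fun i _ => Finset.sum_eq_zero fun j _ => by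
          rw [mul_comm]; exact h4 i j
      have hpq : ∑ i, ∑ j, p j * q'' i j = ∑ i, ∑ j, p j * q i j := by
        have l : ∀ r : Fin I → Fin J → ℝ,
            ∑ i, ∑ j, p j * r i j = ∑ j, p j * ∑ i, r i j := by
          intro r
          rw [Finset.sum_comm]
          exact Finset.sum_congr rfl fun j _ => (Finset.mul_sum _ _ _).symm
        rw [l, l]
        exact Finset.sum_congr rfl fun j _ => by rw [hf''.2 j, hmc j]
      have e0 : ∑ i, deriv (u i) (effRes c q i) * (effRes c q'' i - effRes c q i)
          = (∑ i, deriv (u i) (effRes c q i) * effRes c q'' i)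
            - ∑ i, deriv (u i) (effRes c q i) * effRes c q i := by
        rw [← Finset.sum_sub_distrib]
        exact Finset.sum_congr rfl fun i _ => mul_sub _ _ _
      rw [e0, expand q'', expand q, hzero, hpq]
      ring
    have hopt2 : ∀ q'' : Fin I → Fin J → ℝ, Feasible Q q'' →
        welfare u c q'' ≤ welfare u c q := by
      intro q'' hf''
      have h1 := chain q'' hf''
      have h2 : ∑ i, ∑ j, (deriv (u i) (effRes c q i) * c i j - p j) * q'' i j ≤ 0 :=
        Finset.sum_nonpos fun i _ => Finset.sum_nonpos fun j _ =>
          mul_nonpos_iff.mpr (Or.inr ⟨sub_nonpos.mpr (h3 i j), hf''.1 i j⟩)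
      linarith
    refine ⟨⟨⟨hq0, hmc⟩, hopt2⟩, ?_⟩
    intro hgen q' hq'f hq'opt
    have hWeq : welfare u c q' = welfare u c q :=
      le_antisymm (hopt2 q' hq'f) (hq'opt q ⟨hq0, hmc⟩)
    have hxeq : ∀ i, effRes c q' i = effRes c q i := by
      by_contra hne
      push_neg at hne
      obtain ⟨i0, hi0⟩ := hne
      set m : Fin I → Fin J → ℝ := fun i j => (q i j + q' i j) / 2 with hm
      have hmf : Feasible Q m := by
        constructor
        · intro i j
          have h1 := hq i j; have h2 := hq'f.1 i j
          simp only [hm]; linarith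
        · intro j
          simp only [hm]
          rw [← Finset.sum_div, Finset.sum_add_distrib, hmc j, hq'f.2 j]
          ring
      have hxm : ∀ i, effRes c m i
          = (1/2 : ℝ) * effRes c q i + (1/2 : ℝ) * effRes c q' i := by
        intro i
        simp only [effRes, hm, Finset.mul_sum]
        rw [← Finset.sum_add_distrib]
        exact Finset.sum_congr rfl fun j _ => by ring
      have hmid_lt : ∀ i, effRes c q' i ≠ effRes c q i →
          (1/2 : ℝ) * u i (effRes c q i) + (1/2 : ℝ) * u i (effRes c q' i)
            < u i (effRes c m i) := by
        intro i he
        have hs := (hu_conc i).2 (Set.mem_univ (effRes c q i)) (Set.mem_univ (effRes c q' i))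
          (Ne.symm he) (by norm_num : (0:ℝ) < 1/2) (by norm_num : (0:ℝ) < 1/2) (by norm_num)
        rw [hxm i]
        simp only [smul_eq_mul] at hs
        linarith
      have hmid_le : ∀ i, (1/2 : ℝ) * u i (effRes c q i) + (1/2 : ℝ) * u i (effRes c q' i)
          ≤ u i (effRes c m i) := by
        intro i
        rcases eq_or_ne (effRes c q' i) (effRes c q i) with he | he
        · rw [hxm i, he,
            show (1/2:ℝ) * effRes c q i + (1/2:ℝ) * effRes c q i = effRes c q i by ring]
          linarith
        · exact le_of_lt (hmid_lt i he)
      have hlt : welfare u c q' < welfare u c m := by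
        have h1 : welfare u c q'
            = ∑ i, ((1/2:ℝ) * u i (effRes c q i) + (1/2:ℝ) * u i (effRes c q' i)) := by
          rw [Finset.sum_add_distrib, ← Finset.mul_sum, ← Finset.mul_sum]
          have e1 : ∑ i, u i (effRes c q i) = welfare u c q := rfl
          have e2 : ∑ i, u i (effRes c q' i) = welfare u c q' := rfl
          rw [e1, e2, hWeq]
          ring
        rw [h1]
        exact Finset.sum_lt_sum (fun i _ => hmid_le i) ⟨i0, Finset.mem_univ i0, hmid_lt i0 hi0⟩
      exact absurd (hq'opt m hmf) (not_le.mpr hlt)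
    have hsum0 : ∑ i, ∑ j, (deriv (u i) (effRes c q i) * c i j - p j) * q' i j = 0 := by
      have h1 := chain q' hq'f
      have h2 : ∑ i, ∑ j, (deriv (u i) (effRes c q i) * c i j - p j) * q' i j ≤ 0 :=
        Finset.sum_nonpos fun i _ => Finset.sum_nonpos fun j _ =>
          mul_nonpos_iff.mpr (Or.inr ⟨sub_nonpos.mpr (h3 i j), hq'f.1 i j⟩)
      linarith
    have hterm0 : ∀ i j, (deriv (u i) (effRes c q i) * c i j - p j) * q' i j = 0 := by
      intro i j
      have houter := (Finset.sum_eq_zero_iff_of_nonpos (fun i _ =>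
        Finset.sum_nonpos (fun j _ =>
          mul_nonpos_iff.mpr (Or.inr ⟨sub_nonpos.mpr (h3 i j), hq'f.1 i j⟩)))).mp hsum0
      have hinner := (Finset.sum_eq_zero_iff_of_nonpos (fun j _ =>
        mul_nonpos_iff.mpr (Or.inr ⟨sub_nonpos.mpr (h3 i j), hq'f.1 i j⟩))).mp
          (houter i (Finset.mem_univ i))
      exact hinner j (Finset.mem_univ j)
    have edgeEq : ∀ i j, q' i j ≠ q i j → deriv (u i) (effRes c q i) * c i j = p j := by
      intro i j hne
      rcases eq_or_ne (q i j) 0 with h0 | h0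
      · have hq'ne : q' i j ≠ 0 := by rw [h0] at hne; exact hne
        rcases mul_eq_zero.mp (hterm0 i j) with h | h
        · exact sub_eq_zero.mp h
        · exact absurd h hq'ne
      · rcases mul_eq_zero.mp (h4 i j) with h | h
        · exact absurd h h0
        · exact sub_eq_zero.mp h
    by_contra hne'
    have hEne : ∃ i j, q' i j ≠ q i j := by
      by_contra hall
      push_neg at hall
      exact hne' (funext fun i => funext fun j => hall i j)
    obtain ⟨i0, j0, h00⟩ := hEne
    have hA : ∀ i j, (q' i j ≠ q i j) → ∃ j', j' ≠ j ∧ q' i j' ≠ q i j' := by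
      intro i j hij
      by_contra hno
      push_neg at hno
      have hs : ∑ j', (q' i j' - q i j') * c i j' = 0 := by
        have e : ∑ j', (q' i j' - q i j') * c i j' = effRes c q' i - effRes c q i := by
          simp only [effRes]
          rw [← Finset.sum_sub_distrib]
          exact Finset.sum_congr rfl fun j' _ => by ring
        rw [e, hxeq i, sub_self]
      rw [Finset.sum_eq_single_of_mem j (Finset.mem_univ j)
        (fun j' _ hj' => by rw [hno j' hj', sub_self, zero_mul])] at hs
      rcases mul_eq_zero.mp hs with h | h
      · exact hij (sub_eq_zero.mp h)
      · exact absurd h (ne_of_gt (hc i j))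
    have hB : ∀ i j, (q' i j ≠ q i j) → ∃ i', i' ≠ i ∧ q' i' j ≠ q i' j := by
      intro i j hij
      by_contra hno
      push_neg at hno
      have hs : ∑ i', (q' i' j - q i' j) = 0 := by
        rw [Finset.sum_sub_distrib, hq'f.2 j, hmc j, sub_self]
      rw [Finset.sum_eq_single_of_mem i (Finset.mem_univ i)
        (fun i' _ hi' => by rw [hno i' hi', sub_self])] at hs
      exact hij (sub_eq_zero.mp hs)
    obtain ⟨n, hn, ii, jj, hii, hjj, hE1, hE2⟩ :=
      exists_cycle (fun i j => q' i j ≠ q i j) hA hB i0 j0 h00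
    haveI : NeZero n := ⟨by omega⟩
    have hane : ∀ k : Fin n, deriv (u (ii k)) (effRes c q (ii k)) ≠ 0 := by
      intro k h0
      have hh := edgeEq _ _ (hE1 k)
      rw [h0, zero_mul] at hh
      exact absurd hh.symm (ne_of_gt (hp (jj k)))
    have hprodeq : ∏ k : Fin n,
        c (ii k) (jj (k - ⟨1, by omega⟩)) / c (ii k) (jj k) = 1 := by
      have hprod : ∀ k : Fin n, c (ii k) (jj (k - ⟨1, by omega⟩)) / c (ii k) (jj k)
          = p (jj (k - ⟨1, by omega⟩)) / p (jj k) := by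
        intro k
        rw [show c (ii k) (jj (k - ⟨1, by omega⟩))
              = p (jj (k - ⟨1, by omega⟩)) / deriv (u (ii k)) (effRes c q (ii k)) from
            (eq_div_iff (hane k)).mpr (by rw [mul_comm]; exact edgeEq _ _ (hE2 k)),
          show c (ii k) (jj k)
              = p (jj k) / deriv (u (ii k)) (effRes c q (ii k)) from
            (eq_div_iff (hane k)).mpr (by rw [mul_comm]; exact edgeEq _ _ (hE1 k)),
          div_div_div_comm, div_self (hane k), div_one]
      have hshift : (∏ k : Fin n, p (jj (k - ⟨1, by omega⟩))) = ∏ k : Fin n, p (jj k) :=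
        Fintype.prod_equiv (Equiv.subRight (⟨1, by omega⟩ : Fin n)) _ _ (fun x => rfl)
      rw [Finset.prod_congr rfl fun k _ => hprod k, Finset.prod_div_distrib, hshift]
      exact div_self (Finset.prod_ne_zero_iff.mpr fun k _ => ne_of_gt (hp (jj k)))
    exact hgen n hn ii jj hii hjj hprodeq
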